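/- arXiv:2301.09130 — 7 statements merged into one kernel-verified Lean document; each statement's English description precedes it below -/
import Mathlib

section
/- Let μ ∈ ℝ and v ≥ 0. Then ∫ sin x d(gaussianReal μ v)(x) = exp(−v/2) · sin μ. -/
open MeasureTheory ProbabilityTheory Real NNReal

lemma gaussian_sin_key (μ : ℝ) (v : ℝ≥0) (hv : v ≠ 0) :
    ∫ x : ℝ, Real.exp (- (x - μ)^2 / (2 * v)) * Real.sin x
      = Real.sqrt (2 * π * v) * (Real.exp (-(v:ℝ)/2) * Real.sin μ) := by
  have hv0 : (0:ℝ) < v := by positivity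
  set b : ℂ := ((-(1 / (2 * (v:ℝ))) : ℝ) : ℂ) with hb_def
  set c : ℂ := ((μ / v : ℝ) : ℂ) + Complex.I with hc_def
  set d : ℂ := ((-(μ^2 / (2 * v)) : ℝ) : ℂ) with hd_def
  have hb : b.re < 0 := by
    simp [hb_def]
    positivity
  have hform : ∀ x : ℝ, b * x^2 + c * x + d
      = ((- (x - μ)^2 / (2 * v) : ℝ) : ℂ) + Complex.I * x := by
    intro x
    rw [hb_def, hc_def, hd_def]
    push_cast
    field_simp
    ring
  have heq : ∀ x : ℝ, Real.exp (- (x - μ)^2 / (2 * v)) * Real.sin x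
      = (Complex.exp (b * x^2 + c * x + d)).im := by
    intro x
    rw [hform x, Complex.exp_im, Complex.add_re, Complex.add_im, Complex.ofReal_re,
      Complex.ofReal_im]
    simp [Complex.mul_re, Complex.mul_im]
  simp_rw [heq]
  have hI : (∫ x : ℝ, (Complex.exp (b * x^2 + c * x + d)).im)
      = (∫ x : ℝ, Complex.exp (b * x^2 + c * x + d)).im :=
    integral_im (integrable_cexp_quadratic' hb c d)
  rw [hI, integral_cexp_quadratic hb c d]
  have h1 : ((π : ℂ) / -b) = ((2 * π * v : ℝ) : ℂ) := by
    rw [hb_def]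
    push_cast
    field_simp
  have h2 : d - c^2 / (4 * b) = ((-(v:ℝ)/2 : ℝ) : ℂ) + Complex.I * μ := by
    rw [hb_def, hc_def, hd_def]
    have h : ((v:ℝ) : ℂ) ≠ 0 := by exact_mod_cast hv0.ne'
    push_cast
    field_simp
    ring_nf
    rw [Complex.I_sq]
    ring
  rw [h1, h2]
  have h3 : ((2 * π * v : ℝ) : ℂ) ^ (1/2 : ℂ) = ((Real.sqrt (2 * π * v) : ℝ) : ℂ) := by
    rw [show (1/2 : ℂ) = ((1/2 : ℝ) : ℂ) by norm_num,
      ← Complex.ofReal_cpow (by positivity), Real.sqrt_eq_rpow]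
  rw [h3]
  simp [Complex.mul_im, Complex.exp_im, Complex.exp_re]

theorem gaussian_integral_sin (μ : ℝ) (v : ℝ≥0) :
    ∫ x, Real.sin x ∂(gaussianReal μ v) = Real.exp (-(v : ℝ) / 2) * Real.sin μ := by
  rcases eq_or_ne v 0 with rfl | hv
  · simp [gaussianReal_zero_var]
  · rw [gaussianReal_of_var_ne_zero μ hv]
    have hpdf : gaussianPDF μ v
        = fun x => ((Real.toNNReal (gaussianPDFReal μ v x) : ℝ≥0) : ENNReal) := rfl
    rw [hpdf, integral_withDensity_eq_integral_smul
      ((measurable_gaussianPDFReal μ v).real_toNNReal) Real.sin]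
    have hsmul : ∀ x : ℝ, (Real.toNNReal (gaussianPDFReal μ v x)) • Real.sin x
        = (Real.sqrt (2 * π * v))⁻¹ * (Real.exp (- (x - μ)^2 / (2 * v)) * Real.sin x) := by
      intro x
      rw [NNReal.smul_def, smul_eq_mul, Real.coe_toNNReal _ (gaussianPDFReal_nonneg μ v x),
        gaussianPDFReal, mul_assoc]
    simp_rw [hsmul]
    rw [integral_const_mul, gaussian_sin_key μ v hv]
    have h0 : Real.sqrt (2 * π * v) ≠ 0 := by
      have : (0:ℝ) < v := by positivity
      positivity
    field_simp
end

section
/- Let μ ∈ ℝ and v ≥ 0. Then ∫ x · cos x d(gaussianReal μ v)(x) = exp(−v/2) · (μ · cos μ − v · sin μ). -/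
open MeasureTheory ProbabilityTheory Real NNReal

open Complex in
lemma my_integrable_mul_cexp_quadratic {b : ℂ} (hb : b.re < 0) (c d : ℂ) :
    Integrable (fun x : ℝ ↦ (x : ℂ) * Complex.exp (b * x ^ 2 + c * x + d)) := by
  have h1 := integrable_cexp_quadratic' hb (c + 1) d
  have h2 := integrable_cexp_quadratic' hb (c - 1) d
  refine (h1.norm.add h2.norm).mono' ?_ ?_
  · apply Measurable.aestronglyMeasurable
    fun_prop
  · filter_upwards with x
    simp only [Pi.add_apply]
    have habs : |x| ≤ Real.exp x + Real.exp (-x) := by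
      rcases le_or_gt 0 x with hx | hx
      · rw [_root_.abs_of_nonneg hx]
        calc x ≤ Real.exp x - 1 := by nlinarith [Real.add_one_le_exp x]
        _ ≤ Real.exp x + Real.exp (-x) := by linarith [Real.exp_pos (-x)]
      · rw [abs_of_neg hx]
        calc -x ≤ Real.exp (-x) - 1 := by nlinarith [Real.add_one_le_exp (-x)]
        _ ≤ Real.exp x + Real.exp (-x) := by linarith [Real.exp_pos x]
    have h3 : ‖(x : ℂ) * Complex.exp (b * x ^ 2 + c * x + d)‖
        = |x| * Real.exp ((b * x ^ 2 + c * x + d).re) := by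
      rw [norm_mul, Complex.norm_exp, Complex.norm_real, Real.norm_eq_abs]
    rw [h3]
    have e1 : (b * x ^ 2 + (c + 1) * x + d).re = (b * x ^ 2 + c * x + d).re + x := by
      simp [Complex.add_re, Complex.mul_re]; ring
    have e2 : (b * x ^ 2 + (c - 1) * x + d).re = (b * x ^ 2 + c * x + d).re + -x := by
      simp [Complex.add_re, Complex.sub_re, Complex.mul_re]; ring
    rw [Complex.norm_exp, Complex.norm_exp, e1, e2,
      Real.exp_add, Real.exp_add]
    nlinarith [Real.exp_pos ((b * x ^ 2 + c * x + d).re), habs]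

open Complex in
lemma my_integral_mul_cexp_quadratic {b : ℂ} (hb : b.re < 0) (c d : ℂ) :
    ∫ x : ℝ, (x : ℂ) * Complex.exp (b * x ^ 2 + c * x + d)
      = -c / (2 * b) * ((↑Real.pi / -b) ^ (1 / 2 : ℂ) * Complex.exp (d - c ^ 2 / (4 * b))) := by
  have hb0 : b ≠ 0 := fun h => by simp [h] at hb
  have hint := integrable_cexp_quadratic' hb c d
  have hxint := my_integrable_mul_cexp_quadratic hb c d
  have hderiv : ∀ x : ℝ, HasDerivAt (fun x : ℝ ↦ Complex.exp (b * x ^ 2 + c * x + d))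
      (2 * b * ((x : ℂ) * Complex.exp (b * x ^ 2 + c * x + d))
        + c * Complex.exp (b * x ^ 2 + c * x + d)) x := by
    intro x
    have h1 : HasDerivAt (fun z : ℂ ↦ b * z ^ 2 + c * z + d) (2 * b * x + c) (x : ℂ) := by
      have := (((hasDerivAt_pow 2 (x : ℂ)).const_mul b).add
        ((hasDerivAt_id (x : ℂ)).const_mul c)).add_const d
      refine HasDerivAt.congr_deriv this ?_
      simp
      try ring
    have h2 := (h1.cexp).comp_ofReal
    convert h2 using 1
    ring
  have hf' : Integrable (fun x : ℝ ↦ 2 * b * ((x : ℂ) * Complex.exp (b * x ^ 2 + c * x + d))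
      + c * Complex.exp (b * x ^ 2 + c * x + d)) :=
    (hxint.const_mul (2 * b)).add (hint.const_mul c)
  have h0 := integral_eq_zero_of_hasDerivAt_of_integrable hderiv hf' hint
  rw [integral_add (hxint.const_mul (2 * b)) (hint.const_mul c), integral_const_mul,
    integral_const_mul, integral_cexp_quadratic hb c d] at h0
  have h2b : (2 : ℂ) * b ≠ 0 := by simp [hb0]
  rw [div_mul_eq_mul_div, eq_div_iff h2b]
  linear_combination h0

theorem gaussian_integral_id_mul_cos (μ : ℝ) (v : ℝ≥0) :
    ∫ x, x * Real.cos x ∂(gaussianReal μ v) =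
      Real.exp (-(v : ℝ) / 2) * (μ * Real.cos μ - (v : ℝ) * Real.sin μ) := by
  by_cases hv : v = 0
  · subst hv
    simp [gaussianReal_zero_var, integral_dirac]
  have hV : (0 : ℝ) < (v : ℝ) := lt_of_le_of_ne v.coe_nonneg (by exact_mod_cast Ne.symm hv)
  set V : ℝ := (v : ℝ) with hVdef
  set b : ℂ := ((-(2 * V)⁻¹ : ℝ) : ℂ) with hbdef
  set c : ℂ := (μ / V : ℝ) + Complex.I with hcdef
  set d : ℂ := ((-(μ ^ 2) / (2 * V) : ℝ) : ℂ) with hddef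
  have hVne : (V : ℂ) ≠ 0 := by exact_mod_cast hV.ne'
  have hb : b.re < 0 := by
    rw [hbdef, Complex.ofReal_re]
    have : (0:ℝ) < (2 * V)⁻¹ := by positivity
    linarith
  have hb0 : b ≠ 0 := fun h => by simp [h] at hb
  -- pointwise identity for the real part
  have hq : ∀ x : ℝ, b * x ^ 2 + c * x + d = ((-(x - μ) ^ 2 / (2 * V) : ℝ) : ℂ) + x * Complex.I := by
    intro x
    have e : (-(2 * V)⁻¹) * x ^ 2 + (μ / V) * x + (-μ ^ 2 / (2 * V)) = -(x - μ) ^ 2 / (2 * V) := by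
      field_simp
      ring
    rw [hbdef, hcdef, hddef, ← e]
    push_cast
    ring
  have hre : ∀ x : ℝ, ((x : ℂ) * Complex.exp (b * x ^ 2 + c * x + d)).re
      = Real.exp (-(x - μ) ^ 2 / (2 * V)) * (x * Real.cos x) := by
    intro x
    rw [hq x, Complex.exp_add, Complex.exp_mul_I]
    simp only [Complex.mul_re, Complex.mul_im, Complex.add_re, Complex.add_im, Complex.I_re,
      Complex.I_im, Complex.ofReal_re, Complex.ofReal_im, Complex.exp_ofReal_re,
      Complex.exp_ofReal_im, Complex.cos_ofReal_re, Complex.cos_ofReal_im,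
      Complex.sin_ofReal_re, Complex.sin_ofReal_im]
    ring
  have hxint := my_integrable_mul_cexp_quadratic hb c d
  set C : ℝ := (Real.sqrt (2 * π * V))⁻¹ with hCdef
  have hsqrt_pos : 0 < Real.sqrt (2 * π * V) := Real.sqrt_pos.mpr (by positivity)
  -- rewrite the measure
  rw [gaussianReal_of_var_ne_zero μ hv]
  have hpdf_eq : gaussianPDF μ v = fun x ↦ ((gaussianPDFReal μ v x).toNNReal : ENNReal) := rfl
  rw [hpdf_eq, integral_withDensity_eq_integral_smul
    ((measurable_gaussianPDFReal μ v).real_toNNReal) _]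
  have hstep : ∀ x : ℝ, (gaussianPDFReal μ v x).toNNReal • (x * Real.cos x)
      = C * ((x : ℂ) * Complex.exp (b * x ^ 2 + c * x + d)).re := by
    intro x
    rw [NNReal.smul_def, Real.coe_toNNReal _ (gaussianPDFReal_nonneg μ v x), smul_eq_mul, hre x,
      gaussianPDFReal_def]
    rw [← hVdef, hCdef]
    ring
  simp_rw [hstep]
  rw [integral_const_mul]
  have hre_int : ∫ x : ℝ, ((x : ℂ) * Complex.exp (b * x ^ 2 + c * x + d)).re
      = (∫ x : ℝ, (x : ℂ) * Complex.exp (b * x ^ 2 + c * x + d)).re := by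
    simp_rw [← RCLike.re_to_complex]
    exact integral_re hxint
  rw [hre_int, my_integral_mul_cexp_quadratic hb c d]
  have h1 : -c / (2 * b) = (μ : ℂ) + (V : ℂ) * Complex.I := by
    rw [hbdef, hcdef]
    push_cast
    field_simp
  have h2 : ((π : ℂ) / -b) = ((2 * π * V : ℝ) : ℂ) := by
    rw [hbdef]
    push_cast
    field_simp
  have h3 : d - c ^ 2 / (4 * b) = ((-V / 2 : ℝ) : ℂ) + (μ : ℂ) * Complex.I := by
    have hc2 : c ^ 2 = ((((μ / V) ^ 2 - 1 : ℝ)) : ℂ) + ((2 * μ / V : ℝ) : ℂ) * Complex.I := by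
      rw [hcdef]
      push_cast
      linear_combination Complex.I_sq
    rw [hbdef, hddef, hc2]
    push_cast
    field_simp
    have hVpow : ((V : ℂ)) ^ 4 * ((V : ℂ))⁻¹ ^ 4 = 1 := by
      rw [← mul_pow, mul_inv_cancel₀ hVne, one_pow]
    linear_combination (0 : ℂ) * hVpow
  have h4 : ((2 * π * V : ℝ) : ℂ) ^ (1 / 2 : ℂ) = ((Real.sqrt (2 * π * V) : ℝ) : ℂ) := by
    have : (1 / 2 : ℂ) = ((1 / 2 : ℝ) : ℂ) := by norm_num
    rw [this, ← Complex.ofReal_cpow (by positivity), ← Real.sqrt_eq_rpow]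
  rw [h1, h2, h3, h4, Complex.exp_add, Complex.exp_mul_I]
  simp only [Complex.mul_re, Complex.mul_im, Complex.add_re, Complex.add_im, Complex.I_re,
    Complex.I_im, Complex.ofReal_re, Complex.ofReal_im, Complex.exp_ofReal_re,
    Complex.exp_ofReal_im, Complex.cos_ofReal_re, Complex.cos_ofReal_im,
    Complex.sin_ofReal_re, Complex.sin_ofReal_im]
  rw [hCdef]
  field_simp
  ring
end

section
/- Let μ ∈ ℝ and v ≥ 0. Then ∫ x · sin x d(gaussianReal μ v)(x) = exp(−v/2) · (μ · sin μ + v · cos μ). -/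
open MeasureTheory ProbabilityTheory Real NNReal

lemma integrable_id_mul_cexp_quadratic {b : ℂ} (hb : b.re < 0) (c d : ℂ) :
    Integrable fun x : ℝ ↦ (x : ℂ) * Complex.exp (b * x ^ 2 + c * x + d) := by
  have h1 := (integrable_cexp_quadratic' hb (c + 1) d).norm
  have h2 := (integrable_cexp_quadratic' hb (c - 1) d).norm
  refine (h1.add h2).mono' ?_ (Filter.Eventually.of_forall fun x ↦ ?_)
  · exact (Complex.continuous_ofReal.mul (Complex.continuous_exp.comp (by continuity))).aestronglyMeasurable
  · have hre : ∀ c' : ℂ, (b * x ^ 2 + c' * x + d).re = b.re * x ^ 2 + c'.re * x + d.re := by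
      intro c'; simp [Complex.add_re, Complex.mul_re, ← Complex.ofReal_pow]
    have hxle : |x| ≤ Real.exp x + Real.exp (-x) := by
      have h := Real.add_one_le_exp |x|
      have : |x| ≤ Real.exp |x| := by linarith
      rcases abs_cases x with ⟨h1, _⟩ | ⟨h1, _⟩
      · calc |x| ≤ Real.exp |x| := this
          _ ≤ Real.exp x + Real.exp (-x) := by rw [h1]; linarith [Real.exp_pos (-x)]
      · calc |x| ≤ Real.exp |x| := this
          _ ≤ Real.exp x + Real.exp (-x) := by rw [h1]; linarith [Real.exp_pos x]
    simp only [Pi.add_apply, norm_mul, Complex.norm_real,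
      Complex.norm_exp, Real.norm_eq_abs]
    rw [hre c, hre (c + 1), hre (c - 1), Complex.add_re, Complex.sub_re, Complex.one_re]
    calc |x| * Real.exp (b.re * x ^ 2 + c.re * x + d.re)
        ≤ (Real.exp x + Real.exp (-x)) * Real.exp (b.re * x ^ 2 + c.re * x + d.re) :=
          mul_le_mul_of_nonneg_right hxle (Real.exp_pos _).le
      _ = Real.exp (b.re * x ^ 2 + (c.re + 1) * x + d.re)
          + Real.exp (b.re * x ^ 2 + (c.re - 1) * x + d.re) := by
          rw [add_mul, ← Real.exp_add, ← Real.exp_add]; ring_nf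

lemma integral_id_mul_cexp_quadratic {b : ℂ} (hb : b.re < 0) (c d : ℂ) :
    ∫ x : ℝ, (x : ℂ) * Complex.exp (b * x ^ 2 + c * x + d)
      = -c / (2 * b) * ∫ x : ℝ, Complex.exp (b * x ^ 2 + c * x + d) := by
  have hb' : b ≠ 0 := by intro h; rw [h] at hb; simp at hb
  have hderiv : ∀ x : ℝ, HasDerivAt (fun y : ℝ ↦ Complex.exp (b * y ^ 2 + c * y + d))
      ((2 * b * x + c) * Complex.exp (b * x ^ 2 + c * x + d)) x := by
    intro x
    have h : HasDerivAt (fun y : ℂ ↦ b * y ^ 2 + c * y + d) (2 * b * x + c) (x : ℂ) := by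
      have := (((hasDerivAt_pow 2 (x : ℂ)).const_mul b).add
        ((hasDerivAt_id (x : ℂ)).const_mul c)).add_const d
      exact this.congr_deriv (by norm_num; ring)
    simpa [mul_comm] using (h.cexp).comp_ofReal
  have hint1 : Integrable fun x : ℝ ↦ (x : ℂ) * Complex.exp (b * x ^ 2 + c * x + d) :=
    integrable_id_mul_cexp_quadratic hb c d
  have hint0 : Integrable fun x : ℝ ↦ Complex.exp (b * x ^ 2 + c * x + d) :=
    integrable_cexp_quadratic' hb c d
  have hint' : Integrable fun x : ℝ ↦ (2 * b * x + c) * Complex.exp (b * x ^ 2 + c * x + d) := by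
    have := (hint1.const_mul (2 * b)).add (hint0.const_mul c)
    exact this.congr (Filter.Eventually.of_forall fun x ↦ by simp only [Pi.add_apply]; ring)
  have hzero : ∫ x : ℝ, (2 * b * x + c) * Complex.exp (b * x ^ 2 + c * x + d) = 0 :=
    integral_eq_zero_of_hasDerivAt_of_integrable hderiv hint' hint0
  have hsplit : ∫ x : ℝ, (2 * b * x + c) * Complex.exp (b * x ^ 2 + c * x + d)
      = 2 * b * (∫ x : ℝ, (x : ℂ) * Complex.exp (b * x ^ 2 + c * x + d))
        + c * ∫ x : ℝ, Complex.exp (b * x ^ 2 + c * x + d) := by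
    rw [← integral_const_mul, ← integral_const_mul, ← integral_add (hint1.const_mul _) (hint0.const_mul _)]
    congr 1; funext x; ring
  rw [hsplit] at hzero
  have h2b : (2 : ℂ) * b ≠ 0 := by simp [hb']
  refine mul_left_cancel₀ h2b ?_
  rw [neg_div, neg_mul, mul_neg, ← mul_assoc, mul_div_assoc', mul_div_cancel_left₀ _ h2b]
  linear_combination hzero

theorem gaussian_integral_id_mul_sin (μ : ℝ) (v : ℝ≥0) :
    ∫ x, x * Real.sin x ∂(gaussianReal μ v) =
      Real.exp (-(v : ℝ) / 2) * (μ * Real.sin μ + (v : ℝ) * Real.cos μ) := by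
  by_cases hv : v = 0
  · subst hv
    rw [gaussianReal_zero_var, integral_dirac]
    simp
  have hV : 0 < (v : ℝ) := lt_of_le_of_ne (v.coe_nonneg) (by exact_mod_cast (Ne.symm hv))
  have hV0 : ((v : ℝ) : ℂ) ≠ 0 := by exact_mod_cast ne_of_gt hV
  set V : ℝ := (v : ℝ)
  set b : ℂ := ((-(1 / (2 * V)) : ℝ) : ℂ) with hbdef
  set c : ℂ := Complex.I + ((μ / V : ℝ) : ℂ) with hcdef
  set d : ℂ := ((-(μ ^ 2 / (2 * V)) : ℝ) : ℂ) with hddef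
  have hb : b.re < 0 := by
    rw [hbdef, Complex.ofReal_re]
    simp only [neg_lt, neg_zero] at *
    positivity
  have hsq : (0 : ℝ) < √(2 * π * V) := Real.sqrt_pos.mpr (by positivity)
  -- Step A : rewrite the integral against the density
  have hrw : ∫ x, x * Real.sin x ∂(gaussianReal μ v)
      = ∫ x, gaussianPDFReal μ v x * (x * Real.sin x) := by
    rw [gaussianReal_of_var_ne_zero μ hv, gaussianPDF_def]
    rw [show (fun x ↦ ENNReal.ofReal (gaussianPDFReal μ v x))
        = (fun x ↦ ((gaussianPDFReal μ v x).toNNReal : ENNReal)) from rfl]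
    rw [integral_withDensity_eq_integral_smul (measurable_gaussianPDFReal μ v).real_toNNReal]
    congr 1; funext x
    rw [NNReal.smul_def, Real.coe_toNNReal _ (gaussianPDFReal_nonneg μ v x), smul_eq_mul]
  -- Step B : pointwise identity with the imaginary part of a complex integrand
  have hq : ∀ x : ℝ, b * x ^ 2 + c * x + d = ((-(x - μ) ^ 2 / (2 * V) : ℝ) : ℂ) + x * Complex.I := by
    intro x
    rw [hbdef, hcdef, hddef]
    push_cast
    field_simp
    ring
  have hpt : ∀ x : ℝ, gaussianPDFReal μ v x * (x * Real.sin x)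
      = ((((√(2 * π * V))⁻¹ : ℝ) : ℂ) * ((x : ℂ) * Complex.exp (b * x ^ 2 + c * x + d))).im := by
    intro x
    rw [hq x, Complex.exp_add, ← Complex.ofReal_exp, Complex.exp_mul_I,
      ← Complex.ofReal_cos, ← Complex.ofReal_sin]
    simp only [Complex.mul_im, Complex.mul_re, Complex.add_re, Complex.add_im,
      Complex.ofReal_re, Complex.ofReal_im, Complex.I_re, Complex.I_im,
      gaussianPDFReal]
    ring
  have hint : Integrable (fun x : ℝ ↦
      ((((√(2 * π * V))⁻¹ : ℝ) : ℂ) * ((x : ℂ) * Complex.exp (b * x ^ 2 + c * x + d)))) :=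
    (integrable_id_mul_cexp_quadratic hb c d).const_mul _
  rw [hrw, show (fun x ↦ gaussianPDFReal μ v x * (x * Real.sin x))
      = fun (x : ℝ) ↦ ((((√(2 * π * V))⁻¹ : ℝ) : ℂ)
          * ((x : ℂ) * Complex.exp (b * x ^ 2 + c * x + d))).im from funext hpt]
  have him : ∫ x : ℝ, ((((√(2 * π * V))⁻¹ : ℝ) : ℂ)
      * ((x : ℂ) * Complex.exp (b * x ^ 2 + c * x + d))).im
      = (∫ x : ℝ, (((√(2 * π * V))⁻¹ : ℝ) : ℂ)
          * ((x : ℂ) * Complex.exp (b * x ^ 2 + c * x + d))).im := integral_im hint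
  rw [him]
  -- Step C : compute the complex integral
  rw [integral_const_mul, integral_id_mul_cexp_quadratic hb c d, integral_cexp_quadratic hb c d]
  -- constants
  have h1 : -c / (2 * b) = (μ : ℂ) + (V : ℂ) * Complex.I := by
    rw [hbdef, hcdef]
    push_cast
    field_simp
    ring
  have h2 : ((π : ℂ) / -b) ^ (1 / 2 : ℂ) = ((√(2 * π * V) : ℝ) : ℂ) := by
    have he : ((π : ℂ) / -b) = ((2 * π * V : ℝ) : ℂ) := by
      rw [hbdef]; push_cast; field_simp
    rw [he, show ((1 / 2 : ℂ)) = ((1 / 2 : ℝ) : ℂ) by norm_num,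
      ← Complex.ofReal_cpow (by positivity), ← Real.sqrt_eq_rpow]
  have h3 : d - c ^ 2 / (4 * b) = ((-V / 2 : ℝ) : ℂ) + (μ : ℂ) * Complex.I := by
    rw [hbdef, hcdef, hddef]
    have hI := Complex.I_sq
    push_cast
    field_simp
    linear_combination (4 * (V : ℂ) ^ 2) * hI
  rw [h1, h2, h3, Complex.exp_add, ← Complex.ofReal_exp, Complex.exp_mul_I,
    ← Complex.ofReal_cos, ← Complex.ofReal_sin]
  simp only [Complex.mul_im, Complex.mul_re, Complex.add_re, Complex.add_im,
    Complex.ofReal_re, Complex.ofReal_im, Complex.I_re, Complex.I_im]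
  have : -(V : ℝ) / 2 = -V / 2 := rfl
  field_simp
  ring
end

section
/- Let μ ∈ ℝ and v ≥ 0. Then ∫ cos x · sin x d(gaussianReal μ v)(x) = exp(−2v) · sin(2μ) / 2. -/
open MeasureTheory ProbabilityTheory Real NNReal ENNReal Complex

lemma gauss_cexp (μ : ℝ) (v : ℝ≥0) (hv : v ≠ 0) :
    ∫ x : ℝ, Complex.exp (2 * x * Complex.I) ∂(gaussianReal μ v) =
      Complex.exp (2 * μ * Complex.I - 2 * v) := by
  have hv0 : (0:ℝ) < v := by simpa using hv.bot_lt
  have hvC : (v:ℂ) ≠ 0 := by exact_mod_cast hv0.ne'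
  rw [gaussianReal_of_var_ne_zero _ hv, gaussianPDF_def]
  have h1 : ∀ x : ℝ, ENNReal.ofReal (gaussianPDFReal μ v x)
      = ((gaussianPDFReal μ v x).toNNReal : ℝ≥0∞) := fun _ => rfl
  simp_rw [h1]
  rw [integral_withDensity_eq_integral_smul
    ((measurable_gaussianPDFReal μ v).real_toNNReal)
    (fun x : ℝ => Complex.exp (2 * x * Complex.I))]
  set b : ℂ := -(2 * (v:ℂ))⁻¹ with hb
  set c : ℂ := μ / v + 2 * Complex.I with hc
  set d : ℂ := -(μ:ℂ)^2 / (2 * v) with hd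
  have hbR : b = ((-(2 * (v:ℝ))⁻¹ : ℝ) : ℂ) := by rw [hb]; push_cast; ring
  have hbre : b.re < 0 := by
    rw [hbR, Complex.ofReal_re]
    have : (0:ℝ) < (2 * (v:ℝ))⁻¹ := by positivity
    linarith
  have key : ∀ x : ℝ, (gaussianPDFReal μ v x).toNNReal • Complex.exp (2 * x * Complex.I)
      = ((√(2 * π * v))⁻¹ : ℂ) * Complex.exp (b * x^2 + c * x + d) := by
    intro x
    rw [NNReal.smul_def, Real.coe_toNNReal _ (gaussianPDFReal_nonneg μ v x),
      real_smul, gaussianPDFReal]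
    push_cast
    rw [mul_assoc, ← Complex.exp_add]
    congr 2
    rw [hb, hc, hd]
    field_simp
    ring
  simp_rw [key]
  rw [integral_const_mul, integral_cexp_quadratic hbre]
  have hnegb : (↑π / -b) = ((2 * π * v : ℝ) : ℂ) := by
    rw [hb, neg_neg]
    push_cast
    field_simp
  have hpow : (↑π / -b) ^ (1/2 : ℂ) = ((√(2 * π * v) : ℝ) : ℂ) := by
    rw [hnegb]
    have : ((1:ℂ)/2) = ((1/2 : ℝ) : ℂ) := by norm_num
    rw [this, ← Complex.ofReal_cpow (by positivity), Real.sqrt_eq_rpow]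
  have harg : d - c^2 / (4 * b) = 2 * μ * Complex.I - 2 * v := by
    rw [hb, hc, hd]
    have hI : Complex.I^2 = -1 := Complex.I_sq
    field_simp
    ring_nf
    rw [hI]
    ring
  have hs : ((√(2 * π * v) : ℝ) : ℂ) ≠ 0 := by
    exact_mod_cast (Real.sqrt_pos.mpr (by positivity)).ne'
  rw [hpow, harg, ← mul_assoc, inv_mul_cancel₀ hs, one_mul]

theorem gaussian_integral_cos_mul_sin (μ : ℝ) (v : ℝ≥0) :
    ∫ x, Real.cos x * Real.sin x ∂(gaussianReal μ v) =
      Real.exp (-2 * (v : ℝ)) * Real.sin (2 * μ) / 2 := by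
  by_cases hv : v = 0
  · subst hv
    rw [gaussianReal_zero_var, integral_dirac]
    simp [Real.sin_two_mul]
    ring
  · have hint : Integrable (fun x : ℝ => Complex.exp (2 * x * Complex.I)) (gaussianReal μ v) := by
      refine (integrable_const (1:ℝ)).mono' ?_ ?_
      · exact (Complex.continuous_exp.comp (by continuity)).aestronglyMeasurable
      · refine Filter.Eventually.of_forall fun x => ?_
        have : (2 : ℂ) * x * Complex.I = ((2*x : ℝ) : ℂ) * Complex.I := by push_cast; ring
        rw [this, Complex.norm_exp_ofReal_mul_I]
    have h1 : ∀ x : ℝ, Real.cos x * Real.sin x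
        = (Complex.exp (2 * x * Complex.I)).im / 2 := by
      intro x
      have : (2 : ℂ) * x * Complex.I = ((2*x : ℝ) : ℂ) * Complex.I := by push_cast; ring
      rw [this, Complex.exp_ofReal_mul_I_im, Real.sin_two_mul]
      ring
    simp_rw [h1]
    have him : ∫ a : ℝ, (Complex.exp (2 * a * Complex.I)).im ∂(gaussianReal μ v)
        = (∫ a : ℝ, Complex.exp (2 * a * Complex.I) ∂(gaussianReal μ v)).im :=
      integral_im hint
    rw [integral_div, him, gauss_cexp μ v hv]
    have h2 : (2 : ℂ) * μ * Complex.I - 2 * v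
        = ((-2 * (v:ℝ) : ℝ) : ℂ) + ((2*μ : ℝ) : ℂ) * Complex.I := by push_cast; ring
    rw [h2, Complex.exp_add, ← Complex.ofReal_exp, Complex.mul_im, Complex.ofReal_re, Complex.ofReal_im, Complex.exp_ofReal_mul_I_re,
      Complex.exp_ofReal_mul_I_im]
    ring
end

section
/- Let μ ∈ ℝ and v ≥ 0. Then ∫ x² · cos x d(gaussianReal μ v)(x) = exp(−v/2) · ((μ² + v − v²) · cos μ − 2 μ v · sin μ). -/
open MeasureTheory ProbabilityTheory Real NNReal

noncomputable section

-- integrability of |x|^n * exp(-β x²)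
lemma aux_int_pow_exp {β : ℝ} (hβ : 0 < β) (n : ℕ) :
    Integrable (fun x : ℝ ↦ |x| ^ n * Real.exp (-β * x ^ 2)) := by
  have h := integrable_rpow_mul_exp_neg_mul_sq hβ (s := (n : ℝ))
    (neg_one_lt_zero.trans_le (Nat.cast_nonneg n))
  have h2 : Integrable (fun x : ℝ ↦ x ^ n * Real.exp (-β * x ^ 2)) := by
    simpa [Real.rpow_natCast] using h
  have := h2.norm
  refine this.congr ?_
  filter_upwards with x
  simp [abs_mul, _root_.abs_pow, Real.abs_exp]

lemma aux_int_cexp (b c : ℂ) (hb : b.re < 0) (n : ℕ) :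
    Integrable (fun x : ℝ ↦ (x : ℂ) ^ n * Complex.exp (b * x ^ 2 + c * x)) := by
  set β : ℝ := -b.re with hβdef
  have hβ : 0 < β := by simpa [hβdef] using hb
  have hmeas : AEStronglyMeasurable
      (fun x : ℝ ↦ (x : ℂ) ^ n * Complex.exp (b * x ^ 2 + c * x)) volume := by
    exact (Continuous.mul (by continuity) (by continuity)).aestronglyMeasurable
  set M : ℝ := Real.exp (c.re ^ 2 / (2 * β)) with hM
  refine Integrable.mono' ((aux_int_pow_exp (by positivity : (0:ℝ) < β/2) n).const_mul M)
    hmeas ?_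
  filter_upwards with x
  rw [norm_mul]
  simp only [Complex.norm_exp]
  have hre : (b * x ^ 2 + c * x).re = -β * x ^ 2 + c.re * x := by
    simp [Complex.add_re, Complex.mul_re, hβdef, ← Complex.ofReal_pow]
  rw [hre]
  have hnorm : ‖(x : ℂ) ^ n‖ = |x| ^ n := by
    simp
  rw [hnorm]
  have key : Real.exp (-β * x ^ 2 + c.re * x) ≤ M * Real.exp (-(β/2) * x ^ 2) := by
    rw [hM, ← Real.exp_add]
    apply Real.exp_le_exp.2
    rw [← sub_nonneg]
    have expand : (c.re ^ 2 / (2 * β) + -(β / 2) * x ^ 2) - (-β * x ^ 2 + c.re * x)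
        = (β * x - c.re) ^ 2 / (2 * β) := by
      field_simp
      ring
    rw [expand]
    positivity
  calc |x| ^ n * Real.exp (-β * x ^ 2 + c.re * x)
      ≤ |x| ^ n * (M * Real.exp (-(β/2) * x ^ 2)) := by
        exact mul_le_mul_of_nonneg_left key (by positivity)
    _ = M * (|x| ^ n * Real.exp (-(β/2) * x ^ 2)) := by ring

lemma aux_deriv (b c : ℂ) (n : ℕ) (x : ℝ) :
    HasDerivAt (fun y : ℝ ↦ (y : ℂ) ^ (n+1) * Complex.exp (b * y ^ 2 + c * y))
      (((n+1 : ℂ) * x ^ n + c * x ^ (n+1) + 2 * b * x ^ (n+2)) *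
        Complex.exp (b * x ^ 2 + c * x)) x := by
  have hq : HasDerivAt (fun z : ℂ ↦ b * z ^ 2 + c * z) (2 * b * (x:ℂ) + c) (x:ℂ) := by
    have := ((hasDerivAt_pow 2 (x:ℂ)).const_mul b).add ((hasDerivAt_id (x:ℂ)).const_mul c)
    exact this.congr_deriv (by push_cast; ring)
  have hexp := hq.cexp
  have hpow := hasDerivAt_pow (n+1) (x:ℂ)
  have hmul := hpow.mul hexp
  have := hmul.comp_ofReal
  exact this.congr_deriv (by push_cast; ring)

lemma aux_rec (b c : ℂ) (hb : b.re < 0) (n : ℕ) :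
    (n+1 : ℂ) * (∫ x : ℝ, (x:ℂ) ^ n * Complex.exp (b * x ^ 2 + c * x)) +
      c * (∫ x : ℝ, (x:ℂ) ^ (n+1) * Complex.exp (b * x ^ 2 + c * x)) +
      2 * b * (∫ x : ℝ, (x:ℂ) ^ (n+2) * Complex.exp (b * x ^ 2 + c * x)) = 0 := by
  have hint' : Integrable (fun x : ℝ ↦
      ((n+1 : ℂ) * x ^ n + c * x ^ (n+1) + 2 * b * x ^ (n+2)) *
        Complex.exp (b * x ^ 2 + c * x)) := by
    have h0 := (aux_int_cexp b c hb n).const_mul (n+1 : ℂ)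
    have h1 := (aux_int_cexp b c hb (n+1)).const_mul c
    have h2 := (aux_int_cexp b c hb (n+2)).const_mul (2*b)
    refine ((h0.add h1).add h2).congr ?_
    filter_upwards with x
    simp only [Pi.add_apply]
    ring
  have key := integral_eq_zero_of_hasDerivAt_of_integrable
    (aux_deriv b c n) hint' (aux_int_cexp b c hb (n+1))
  have h0 := (aux_int_cexp b c hb n).const_mul (n+1 : ℂ)
  have h1 := (aux_int_cexp b c hb (n+1)).const_mul c
  have h2 := (aux_int_cexp b c hb (n+2)).const_mul (2*b)
  rw [show (fun x : ℝ ↦ ((n+1 : ℂ) * x ^ n + c * x ^ (n+1) + 2 * b * x ^ (n+2)) *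
      Complex.exp (b * x ^ 2 + c * x)) =
      (fun x : ℝ ↦ ((n+1 : ℂ) * ((x:ℂ) ^ n * Complex.exp (b * x ^ 2 + c * x)) +
        c * ((x:ℂ) ^ (n+1) * Complex.exp (b * x ^ 2 + c * x))) +
        2 * b * ((x:ℂ) ^ (n+2) * Complex.exp (b * x ^ 2 + c * x)))
      from funext fun x ↦ by ring] at key
  have h01 : Integrable (fun x : ℝ ↦ (n+1 : ℂ) * ((x:ℂ) ^ n * Complex.exp (b * x ^ 2 + c * x)) +
      c * ((x:ℂ) ^ (n+1) * Complex.exp (b * x ^ 2 + c * x))) := h0.add h1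
  rw [integral_add h01 h2] at key
  rw [integral_add h0 h1,
    integral_const_mul, integral_const_mul, integral_const_mul] at key
  exact key

lemma aux_rec0 (b c : ℂ) (hb : b.re < 0) :
    c * (∫ x : ℝ, Complex.exp (b * x ^ 2 + c * x)) +
      2 * b * (∫ x : ℝ, (x:ℂ) * Complex.exp (b * x ^ 2 + c * x)) = 0 := by
  have hderiv : ∀ x : ℝ, HasDerivAt (fun y : ℝ ↦ Complex.exp (b * y ^ 2 + c * y))
      ((c * 1 + 2 * b * x) * Complex.exp (b * x ^ 2 + c * x)) x := by
    intro x
    have hq : HasDerivAt (fun z : ℂ ↦ b * z ^ 2 + c * z) (2 * b * (x:ℂ) + c) (x:ℂ) := by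
      have := ((hasDerivAt_pow 2 (x:ℂ)).const_mul b).add ((hasDerivAt_id (x:ℂ)).const_mul c)
      exact this.congr_deriv (by push_cast; ring)
    have := hq.cexp.comp_ofReal
    convert this using 1
    ring
  have h0 : Integrable (fun x : ℝ ↦ Complex.exp (b * x ^ 2 + c * x)) := by
    simpa using aux_int_cexp b c hb 0
  have h1 : Integrable (fun x : ℝ ↦ (x:ℂ) * Complex.exp (b * x ^ 2 + c * x)) := by
    simpa using aux_int_cexp b c hb 1
  have hint' : Integrable (fun x : ℝ ↦ (c * 1 + 2 * b * x) * Complex.exp (b * x ^ 2 + c * x)) := by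
    refine ((h0.const_mul c).add (h1.const_mul (2*b))).congr ?_
    filter_upwards with x
    simp only [Pi.add_apply]
    ring
  have key := integral_eq_zero_of_hasDerivAt_of_integrable hderiv hint' h0
  have h01 : Integrable (fun x : ℝ ↦ c * Complex.exp (b * x ^ 2 + c * x)) := h0.const_mul c
  have h11 : Integrable (fun x : ℝ ↦ 2 * b * ((x:ℂ) * Complex.exp (b * x ^ 2 + c * x))) :=
    h1.const_mul (2*b)
  rw [show (fun x : ℝ ↦ (c * 1 + 2 * b * x) * Complex.exp (b * x ^ 2 + c * x)) =
      (fun x : ℝ ↦ c * Complex.exp (b * x ^ 2 + c * x) +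
        2 * b * ((x:ℂ) * Complex.exp (b * x ^ 2 + c * x)))
      from funext fun x ↦ by ring] at key
  rw [integral_add h01 h11, integral_const_mul, integral_const_mul] at key
  exact key

lemma aux_J2 {b c : ℂ} (hb : b.re < 0) :
    ∫ x : ℝ, (x:ℂ) ^ 2 * Complex.exp (b * x ^ 2 + c * x) =
      (c ^ 2 / (4 * b ^ 2) - 1 / (2 * b)) *
        ((↑Real.pi / -b) ^ (1/2 : ℂ) * Complex.exp (-c ^ 2 / (4 * b))) := by
  have hb0 : b ≠ 0 := fun h ↦ by simp [h] at hb
  have hJ0 : (∫ x : ℝ, Complex.exp (b * x ^ 2 + c * x)) =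
      (↑Real.pi / -b) ^ (1/2 : ℂ) * Complex.exp (-c ^ 2 / (4 * b)) := by
    have := integral_cexp_quadratic hb c 0
    rw [show -c ^ 2 / (4 * b) = 0 - c ^ 2 / (4 * b) by ring]
    simpa using this
  have hrec0 := aux_rec0 b c hb
  have hrec1 := aux_rec b c hb 0
  simp only [pow_zero, one_mul, pow_one, Nat.cast_zero, zero_add] at hrec1
  -- hrec1 : J0 + c * J1 + 2*b*J2 = 0
  set J0 := ∫ x : ℝ, Complex.exp (b * x ^ 2 + c * x) with hJ0def
  set J1 := ∫ x : ℝ, (x:ℂ) * Complex.exp (b * x ^ 2 + c * x) with hJ1def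
  set J2 := ∫ x : ℝ, (x:ℂ) ^ 2 * Complex.exp (b * x ^ 2 + c * x) with hJ2def
  have e1' : 2 * b * J1 = -c * J0 := by linear_combination hrec0
  have e2 : 4 * b ^ 2 * J2 = (c ^ 2 - 2 * b) * J0 := by
    linear_combination (2*b) * hrec1 - c * e1'
  rw [← hJ0]
  field_simp
  linear_combination 2*e2

theorem gaussian_integral_sq_mul_cos (μ : ℝ) (v : ℝ≥0) :
    ∫ x, x ^ 2 * Real.cos x ∂(gaussianReal μ v) =
      Real.exp (-(v : ℝ) / 2) *
        ((μ ^ 2 + (v : ℝ) - (v : ℝ) ^ 2) * Real.cos μ - 2 * μ * (v : ℝ) * Real.sin μ) := by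
  rcases eq_or_ne v 0 with hv | hv
  · subst hv
    rw [ProbabilityTheory.gaussianReal_zero_var, integral_dirac]
    push_cast
    simp [Real.exp_zero]
  · have ha : 0 < (v : ℝ) := by
      have : 0 < v := lt_of_le_of_ne zero_le (Ne.symm hv)
      exact_mod_cast this
    set a : ℝ := (v : ℝ) with hadef
    have ha0 : a ≠ 0 := ne_of_gt ha
    set b : ℂ := ((-(1/(2*a)) : ℝ) : ℂ) with hbdef
    set c : ℂ := ((μ/a : ℝ) : ℂ) + Complex.I with hcdef
    have hbre : b.re < 0 := by
      rw [hbdef, Complex.ofReal_re]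
      have : 0 < 1/(2*a) := by positivity
      linarith
    have hb0 : b ≠ 0 := fun h ↦ by simp [h] at hbre
    have hbC : b = -(1/(2*(a:ℂ))) := by rw [hbdef]; push_cast; ring
    have haC : (a : ℂ) ≠ 0 := by exact_mod_cast ha0
    set K : ℝ := (Real.sqrt (2*Real.pi*a))⁻¹ * Real.exp (-μ^2/(2*a)) with hKdef
    -- rewrite the measure
    rw [ProbabilityTheory.gaussianReal_of_var_ne_zero μ hv]
    rw [show ProbabilityTheory.gaussianPDF μ v =
        fun x ↦ ((Real.toNNReal (ProbabilityTheory.gaussianPDFReal μ v x) : ℝ≥0) : ENNReal)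
      from rfl]
    rw [integral_withDensity_eq_integral_smul
      (ProbabilityTheory.measurable_gaussianPDFReal μ v).real_toNNReal]
    have hsmul : ∀ x : ℝ, (Real.toNNReal (ProbabilityTheory.gaussianPDFReal μ v x)) •
        (x ^ 2 * Real.cos x) =
        ProbabilityTheory.gaussianPDFReal μ v x * (x ^ 2 * Real.cos x) := by
      intro x
      rw [NNReal.smul_def, Real.coe_toNNReal _ (ProbabilityTheory.gaussianPDFReal_nonneg μ v x),
        smul_eq_mul]
    simp_rw [hsmul]
    -- pointwise identity with complex integrand
    have hpt : ∀ x : ℝ, ProbabilityTheory.gaussianPDFReal μ v x * (x ^ 2 * Real.cos x) =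
        ((K : ℂ) * ((x:ℂ) ^ 2 * Complex.exp (b * x ^ 2 + c * x))).re := by
      intro x
      have hw : b * (x:ℂ) ^ 2 + c * (x:ℂ) =
          ((-(1/(2*a))*x^2 + μ/a*x : ℝ) : ℂ) + (x:ℝ) * Complex.I := by
        rw [hbdef, hcdef]; push_cast; ring
      rw [hw, Complex.exp_add, ← Complex.ofReal_exp, Complex.exp_mul_I,
        ← Complex.ofReal_cos, ← Complex.ofReal_sin]
      simp only [← Complex.ofReal_pow, Complex.mul_re, Complex.mul_im, Complex.add_re,
        Complex.add_im, Complex.I_re, Complex.I_im, Complex.ofReal_re, Complex.ofReal_im]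
      rw [ProbabilityTheory.gaussianPDFReal, ← hadef]
      have hexp : Real.exp (-(x-μ)^2/(2*a)) =
          Real.exp (-μ^2/(2*a)) * Real.exp (-(1/(2*a))*x^2 + μ/a*x) := by
        rw [← Real.exp_add]
        congr 1
        field_simp
        ring
      rw [hexp, hKdef]
      ring
    simp_rw [hpt]
    -- exchange re and integral
    have hint := (aux_int_cexp b c hbre 2).const_mul (K : ℂ)
    have hre := integral_re hint
    simp only [RCLike.re_to_complex] at hre
    rw [hre, integral_const_mul, aux_J2 hbre]
    -- evaluate
    have h1 : ((Real.pi : ℂ)/(-b))^((1:ℂ)/2) = ((Real.sqrt (2*Real.pi*a) : ℝ) : ℂ) := by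
      have hpb : (Real.pi : ℂ)/(-b) = ((2*Real.pi*a : ℝ) : ℂ) := by
        rw [hbC]
        push_cast
        field_simp
      rw [hpb, Real.sqrt_eq_rpow, Complex.ofReal_cpow (by positivity)]
      norm_num
    have h2 : c^2/(4*b^2) - 1/(2*b) =
        ((a + μ^2 - a^2 : ℝ):ℂ) + ((2*μ*a : ℝ):ℂ)*Complex.I := by
      rw [hbC, hcdef]
      push_cast
      field_simp
      ring_nf
      simp [Complex.I_sq]
      ring
    have h3 : -c^2/(4*b) = ((μ^2/(2*a) - a/2 : ℝ):ℂ) + ((μ:ℝ):ℂ)*Complex.I := by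
      rw [hbC, hcdef]
      push_cast
      field_simp
      ring_nf
      simp [Complex.I_sq]
      ring
    rw [h1, h2, h3, Complex.exp_add, ← Complex.ofReal_exp, Complex.exp_mul_I,
      ← Complex.ofReal_cos, ← Complex.ofReal_sin]
    simp only [Complex.mul_re, Complex.mul_im, Complex.add_re, Complex.add_im,
      Complex.I_re, Complex.I_im, Complex.ofReal_re, Complex.ofReal_im]
    have hs : Real.sqrt (2*Real.pi*a) ≠ 0 := by positivity
    have hE : ∀ t : ℝ, Real.exp (-μ^2/(2*a)) * Real.exp (μ^2/(2*a) - a/2) = Real.exp (-a/2) := by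
      intro t
      rw [← Real.exp_add]
      congr 1
      ring
    rw [hKdef]
    rw [show Real.exp (-a/2) = Real.exp (-μ^2/(2*a)) * Real.exp (μ^2/(2*a) - a/2) from
      (hE 0).symm]
    field_simp
    ring_nf

end
end

section
/- Let μ_x, μ_θ, ρ ∈ ℝ and σ_x², σ_θ² > 0 with σ_x² σ_θ² − ρ² > 0, and let p(x, θ) = (2π √(σ_x² σ_θ² − ρ²))^{−1} exp(−½ (x − μ_x, θ − μ_θ) Σ^{−1} (x − μ_x, θ − μ_θ)ᵀ) be the joint Gaussian density on ℝ² with covariance matrix Σ = [[σ_x², ρ], [ρ, σ_θ²]]. Then ∫∫_{ℝ²} x · cos θ · p(x, θ) dx dθ = exp(−σ_θ²/2) · (μ_x · cos μ_θ − ρ · sin μ_θ). -/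
open MeasureTheory Real Matrix

-- integrability of x * cexp(-b x^2 + c x)
lemma aux_integrable_mul_cexp (b c : ℂ) (hb : 0 < b.re) :
    Integrable fun x : ℝ => (x : ℂ) * Complex.exp (-b * x ^ 2 + c * x) := by
  have hmeas : AEStronglyMeasurable (fun x : ℝ => (x : ℂ) * Complex.exp (-b * x ^ 2 + c * x)) volume := by
    apply Continuous.aestronglyMeasurable
    exact Complex.continuous_ofReal.mul (Complex.continuous_exp.comp (by continuity))
  have h2 : Integrable (fun x : ℝ => x * Real.exp (-(b.re / 2) * x ^ 2)) :=
    integrable_mul_exp_neg_mul_sq (by linarith)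
  refine ((h2.norm.const_mul (Real.exp (c.re ^ 2 / (2 * b.re)))).mono' hmeas ?_)
  filter_upwards with x
  rw [norm_mul, Complex.norm_real, Real.norm_eq_abs, Complex.norm_exp]
  have hre : (-b * x ^ 2 + c * x).re = -b.re * x ^ 2 + c.re * x := by
    simp [Complex.add_re, Complex.mul_re, Complex.ofReal_re, Complex.ofReal_im,
      ← Complex.ofReal_pow]
  rw [hre]
  rw [Real.norm_eq_abs, abs_mul, _root_.abs_of_nonneg (Real.exp_pos _).le]
  have key : -b.re * x ^ 2 + c.re * x ≤ c.re ^ 2 / (2 * b.re) + -(b.re / 2) * x ^ 2 := by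
    have h0 : 0 ≤ (b.re / 2) * (x - c.re / b.re) ^ 2 := by positivity
    have : (b.re / 2) * (x - c.re / b.re) ^ 2
        = (b.re/2) * x ^ 2 - c.re * x + c.re ^ 2 / (2 * b.re) := by
      field_simp
      ring
    nlinarith
  calc |x| * Real.exp (-b.re * x ^ 2 + c.re * x)
      ≤ |x| * Real.exp (c.re ^ 2 / (2 * b.re) + -(b.re / 2) * x ^ 2) := by
        gcongr
    _ = Real.exp (c.re ^ 2 / (2 * b.re)) * (|x| * Real.exp (-(b.re / 2) * x ^ 2)) := by
        rw [Real.exp_add]; ring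

lemma aux_hasDerivAt (b c : ℂ) (x : ℝ) :
    HasDerivAt (fun y : ℝ => Complex.exp (-b * y ^ 2 + c * y))
      ((-2 * b * x + c) * Complex.exp (-b * x ^ 2 + c * x)) x := by
  have h : HasDerivAt (fun z : ℂ => Complex.exp (-b * z ^ 2 + c * z))
      ((-2 * b * x + c) * Complex.exp (-b * (x : ℂ) ^ 2 + c * x)) (x : ℂ) := by
    have h1 : HasDerivAt (fun z : ℂ => -b * z ^ 2 + c * z) (-2 * b * x + c) (x : ℂ) := by
      have := ((hasDerivAt_pow 2 (x : ℂ)).const_mul (-b)).add ((hasDerivAt_id (x : ℂ)).const_mul c)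
      exact this.congr_deriv (by push_cast; ring)
    simpa [mul_comm] using h1.cexp
  exact h.comp_ofReal

lemma aux_integrable_cexp (b c : ℂ) (hb : 0 < b.re) :
    Integrable fun x : ℝ => Complex.exp (-b * x ^ 2 + c * x) := by
  have := integrable_cexp_quadratic hb c 0
  simpa using this

lemma aux_integral_deriv_zero (b c : ℂ) (hb : 0 < b.re) :
    ∫ x : ℝ, (-2 * b * x + c) * Complex.exp (-b * x ^ 2 + c * x) = 0 := by
  have h := integral_mul_deriv_eq_deriv_mul_of_integrable
    (u := fun _ : ℝ => (1 : ℂ)) (u' := fun _ : ℝ => (0 : ℂ))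
    (v := fun x : ℝ => Complex.exp (-b * x ^ 2 + c * x))
    (v' := fun x : ℝ => (-2 * b * x + c) * Complex.exp (-b * x ^ 2 + c * x))
    (fun x _ => hasDerivAt_const x (1 : ℂ)) (fun x _ => aux_hasDerivAt b c x)
    ?_ ?_ ?_
  · simpa using h
  · have h1 : Integrable (fun x : ℝ => (-2 * b) * ((x : ℂ) * Complex.exp (-b * x ^ 2 + c * x))
        + c * Complex.exp (-b * x ^ 2 + c * x)) :=
      ((aux_integrable_mul_cexp b c hb).const_mul _).add
        ((aux_integrable_cexp b c hb).const_mul c)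
    exact h1.congr (by filter_upwards with x; simp [Pi.mul_apply]; ring)
  · exact (integrable_zero ℝ ℂ (volume : Measure ℝ)).congr
      (by filter_upwards with x; simp [Pi.mul_apply])
  · exact ((aux_integrable_cexp b c hb)).congr (by filter_upwards with x; simp [Pi.mul_apply])

lemma aux_integral_mul_cexp (b c : ℂ) (hb : 0 < b.re) :
    ∫ x : ℝ, (x : ℂ) * Complex.exp (-b * x ^ 2 + c * x)
      = c / (2 * b) * ∫ x : ℝ, Complex.exp (-b * x ^ 2 + c * x) := by
  have hb0 : b ≠ 0 := fun h => by simp [h] at hb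
  have h0 := aux_integral_deriv_zero b c hb
  have hsplit : ∫ x : ℝ, (-2 * b * x + c) * Complex.exp (-b * x ^ 2 + c * x)
      = -2 * b * (∫ x : ℝ, (x : ℂ) * Complex.exp (-b * x ^ 2 + c * x))
        + c * ∫ x : ℝ, Complex.exp (-b * x ^ 2 + c * x) := by
    rw [← integral_const_mul, ← integral_const_mul, ← integral_add
      ((aux_integrable_mul_cexp b c hb).const_mul _) ((aux_integrable_cexp b c hb).const_mul _)]
    congr 1; funext x; ring
  rw [hsplit] at h0
  set A := ∫ x : ℝ, (x : ℂ) * Complex.exp (-b * x ^ 2 + c * x)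
  set B := ∫ x : ℝ, Complex.exp (-b * x ^ 2 + c * x)
  field_simp
  linear_combination -h0

lemma aux_S (β : ℝ) (hβ : 0 < β) :
    ∫ x : ℝ, Complex.exp (-(β : ℂ) * x ^ 2 + Complex.I * x)
      = ((Real.sqrt (π / β) * Real.exp (-(1 / (4 * β))) : ℝ) : ℂ) := by
  have hb : (-(β : ℂ)).re < 0 := by simpa using hβ
  have h := integral_cexp_quadratic hb Complex.I 0
  have h1 : ∀ x : ℝ, -(β : ℂ) * x ^ 2 + Complex.I * x + 0 = -(β : ℂ) * x ^ 2 + Complex.I * x := by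
    intro x; ring
  simp_rw [h1] at h
  rw [h]
  have h2 : ((π : ℂ) / - -(β : ℂ)) = ((π / β : ℝ) : ℂ) := by push_cast; ring
  have h3 : ((0 : ℂ) - Complex.I ^ 2 / (4 * -(β : ℂ))) = ((-(1 / (4 * β)) : ℝ) : ℂ) := by
    rw [Complex.I_sq]; push_cast; field_simp; ring
  rw [h2, h3, ← Complex.ofReal_exp]
  have h4 : ((π / β : ℝ) : ℂ) ^ (1 / 2 : ℂ) = ((Real.sqrt (π / β) : ℝ) : ℂ) := by
    rw [show (1 / 2 : ℂ) = ((1 / 2 : ℝ) : ℂ) by norm_num,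
      ← Complex.ofReal_cpow (by positivity : (0:ℝ) ≤ π / β), Real.sqrt_eq_rpow]
  rw [h4, ← Complex.ofReal_mul]

lemma aux_odd_gauss (b : ℝ) : ∫ x : ℝ, x * Real.exp (-b * x ^ 2) = 0 := by
  have h : ∫ x : ℝ, x * Real.exp (-b * x ^ 2)
      = ∫ x : ℝ, (-x) * Real.exp (-b * (-x) ^ 2) := (integral_neg_eq_self _ _).symm
  have h2 : ∫ x : ℝ, (-x) * Real.exp (-b * (-x) ^ 2)
      = -∫ x : ℝ, x * Real.exp (-b * x ^ 2) := by
    rw [← integral_neg]; congr 1; funext x; ring_nf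
  linarith [h.trans h2]

lemma aux_integral_mul_exp_shift (b c : ℝ) (hb : 0 < b) :
    ∫ x : ℝ, x * Real.exp (-(b * (x - c) ^ 2)) = c * Real.sqrt (π / b) := by
  have h := integral_sub_right_eq_self (μ := volume)
    (fun y : ℝ => (y + c) * Real.exp (-b * y ^ 2)) c
  simp only [sub_add_cancel] at h
  have hl : ∀ x : ℝ, x * Real.exp (-(b * (x - c) ^ 2)) = x * Real.exp (-b * (x - c) ^ 2) := by
    intro x; ring_nf
  simp_rw [hl]
  rw [h]
  have hsplit : ∫ y : ℝ, (y + c) * Real.exp (-b * y ^ 2)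
      = (∫ y : ℝ, y * Real.exp (-b * y ^ 2)) + c * ∫ y : ℝ, Real.exp (-b * y ^ 2) := by
    rw [← integral_const_mul, ← integral_add (integrable_mul_exp_neg_mul_sq hb)
      ((integrable_exp_neg_mul_sq hb).const_mul c)]
    congr 1; funext y; ring
  rw [hsplit, aux_odd_gauss, integral_gaussian, zero_add]

theorem integral_mul_cos_bivariate_gaussian
    (mx mθ ρ sx sθ : ℝ) (hsx : 0 < sx) (hsθ : 0 < sθ) (hdet : 0 < sx * sθ - ρ ^ 2)
    (p : ℝ → ℝ → ℝ)
    (hp : ∀ x θ : ℝ, p x θ =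
      (2 * π * Real.sqrt (sx * sθ - ρ ^ 2))⁻¹ *
        Real.exp (-(1 / 2) *
          (![x - mx, θ - mθ] ⬝ᵥ (!![sx, ρ; ρ, sθ] : Matrix (Fin 2) (Fin 2) ℝ)⁻¹.mulVec
            ![x - mx, θ - mθ]))) :
    ∫ θ : ℝ, ∫ x : ℝ, x * Real.cos θ * p x θ =
      Real.exp (-sθ / 2) * (mx * Real.cos mθ - ρ * Real.sin mθ) := by
  have ha : (0:ℝ) < sx * sθ - ρ ^ 2 := hdet
  set a : ℝ := sx * sθ - ρ ^ 2 with ha_def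
  have ha' : a ≠ 0 := ha.ne'
  have hsθ' : sθ ≠ 0 := hsθ.ne'
  set b : ℝ := sθ / (2 * a) with hb_def
  have hbpos : 0 < b := by positivity
  set β : ℝ := 1 / (2 * sθ) with hβ_def
  have hβpos : 0 < β := by positivity
  set k : ℝ := ρ / sθ with hk_def
  set C : ℝ := (2 * π * Real.sqrt a)⁻¹ with hC_def
  set K : ℝ := C * Real.sqrt (π / b) with hK_def
  -- matrix inverse
  have hM : (!![sx, ρ; ρ, sθ] : Matrix (Fin 2) (Fin 2) ℝ)⁻¹
      = a⁻¹ • !![sθ, -ρ; -ρ, sx] := by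
    rw [Matrix.inv_def, Matrix.det_fin_two_of, Matrix.adjugate_fin_two_of, Ring.inverse_eq_inv]
    congr 1
    rw [ha_def]; ring
  -- quadratic form
  have hQ : ∀ x θ : ℝ, -(1/2) *
      (![x - mx, θ - mθ] ⬝ᵥ (!![sx, ρ; ρ, sθ] : Matrix (Fin 2) (Fin 2) ℝ)⁻¹.mulVec
        ![x - mx, θ - mθ])
      = -(b * (x - (mx + k * (θ - mθ))) ^ 2) + -(β * (θ - mθ) ^ 2) := by
    intro x θ
    rw [hM]
    simp only [Matrix.smul_mulVec, Matrix.mulVec, dotProduct, Matrix.of_apply, Fin.sum_univ_two,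
      Matrix.cons_val', Matrix.cons_val_zero, Matrix.cons_val_one, Matrix.head_cons,
      Matrix.head_fin_const, Matrix.smul_apply, Matrix.cons_val_fin_one, Pi.smul_apply,
      smul_eq_mul, Matrix.empty_val', Matrix.cons_val_zero, Matrix.head_cons]
    rw [hb_def, hβ_def, hk_def, ha_def]
    have h1 : sx * sθ - ρ ^ 2 ≠ 0 := ha'
    field_simp
    ring
  -- pointwise form of the integrand
  have hp' : ∀ x θ : ℝ, x * Real.cos θ * p x θ
      = (Real.cos θ * C * Real.exp (-(β * (θ - mθ) ^ 2)))
        * (x * Real.exp (-(b * (x - (mx + k * (θ - mθ))) ^ 2))) := by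
    intro x θ
    rw [hp x θ, hQ x θ, Real.exp_add]
    ring
  -- inner integral
  have hinner : ∀ θ : ℝ, (∫ x : ℝ, x * Real.cos θ * p x θ)
      = Real.cos θ * (mx + k * (θ - mθ)) * (K * Real.exp (-(β * (θ - mθ) ^ 2))) := by
    intro θ
    have h1 : (∫ x : ℝ, x * Real.cos θ * p x θ)
        = (Real.cos θ * C * Real.exp (-(β * (θ - mθ) ^ 2)))
          * ∫ x : ℝ, x * Real.exp (-(b * (x - (mx + k * (θ - mθ))) ^ 2)) := by
      rw [← integral_const_mul]
      congr 1; funext x; exact hp' x θ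
    rw [h1, aux_integral_mul_exp_shift b _ hbpos, hK_def]
    ring
  simp_rw [hinner]
  rw [← integral_add_right_eq_self (μ := volume)
      (fun θ : ℝ => Real.cos θ * (mx + k * (θ - mθ)) * (K * Real.exp (-(β * (θ - mθ) ^ 2)))) mθ]
  simp only [add_sub_cancel_right]
  set r : ℝ := Real.sqrt (π / β) * Real.exp (-(1 / (4 * β))) with hr_def
  have hβC : (0:ℝ) < ((β:ℂ)).re := by simpa using hβpos
  have hS : ∫ v : ℝ, Complex.exp (-(β:ℂ) * v ^ 2 + Complex.I * v) = (r : ℂ) := by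
    rw [aux_S β hβpos]
  have hT : ∫ v : ℝ, (v:ℂ) * Complex.exp (-(β:ℂ) * v ^ 2 + Complex.I * v)
      = Complex.I / (2 * (β:ℂ)) * (r:ℂ) := by
    rw [aux_integral_mul_cexp _ _ hβC, hS]
  set c1 : ℂ := ((K * mx : ℝ) : ℂ) * Complex.exp ((mθ:ℝ) * Complex.I) with hc1_def
  set c2 : ℂ := ((K * k : ℝ) : ℂ) * Complex.exp ((mθ:ℝ) * Complex.I) with hc2_def
  have hre : ∀ v : ℝ, Real.cos (v + mθ) * (mx + k * v) * (K * Real.exp (-(β * v ^ 2)))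
      = (c1 * Complex.exp (-(β:ℂ) * v ^ 2 + Complex.I * v)
        + c2 * ((v:ℂ) * Complex.exp (-(β:ℂ) * v ^ 2 + Complex.I * v))).re := by
    intro v
    have he : Complex.exp (-(β:ℂ) * v ^ 2 + Complex.I * v)
        = ((Real.exp (-(β * v ^ 2)) : ℝ) : ℂ) * Complex.exp ((v:ℝ) * Complex.I) := by
      rw [Complex.exp_add, Complex.ofReal_exp]
      push_cast
      ring_nf
    rw [he]
    have hvm : ((v + mθ : ℝ) : ℂ) * Complex.I = (mθ:ℝ) * Complex.I + (v:ℝ) * Complex.I := by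
      push_cast; ring
    have hcomb : c1 * (((Real.exp (-(β * v ^ 2)) : ℝ) : ℂ) * Complex.exp ((v:ℝ) * Complex.I))
        + c2 * ((v:ℂ) * (((Real.exp (-(β * v ^ 2)) : ℝ) : ℂ) * Complex.exp ((v:ℝ) * Complex.I)))
        = ((K * (mx + k * v) * Real.exp (-(β * v ^ 2)) : ℝ) : ℂ)
          * Complex.exp (((v + mθ : ℝ) : ℂ) * Complex.I) := by
      rw [hvm, Complex.exp_add, hc1_def, hc2_def]
      push_cast
      ring
    rw [hcomb, Complex.re_ofReal_mul, Complex.exp_ofReal_mul_I_re]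
    ring
  simp_rw [hre]
  have hint1 : Integrable (fun v : ℝ => Complex.exp (-(β:ℂ) * v ^ 2 + Complex.I * v)) :=
    aux_integrable_cexp _ _ hβC
  have hint2 : Integrable (fun v : ℝ => (v:ℂ) * Complex.exp (-(β:ℂ) * v ^ 2 + Complex.I * v)) :=
    aux_integrable_mul_cexp _ _ hβC
  have hint : Integrable (fun v : ℝ => c1 * Complex.exp (-(β:ℂ) * v ^ 2 + Complex.I * v)
      + c2 * ((v:ℂ) * Complex.exp (-(β:ℂ) * v ^ 2 + Complex.I * v))) :=
    (hint1.const_mul c1).add (hint2.const_mul c2)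
  have hre_int := integral_re (μ := volume) hint
  simp only [RCLike.re_to_complex] at hre_int
  rw [hre_int]
  rw [integral_add (hint1.const_mul c1) (hint2.const_mul c2), integral_const_mul,
    integral_const_mul, hS, hT]
  -- now a pure computation
  have hIr : Complex.I / (2 * (β:ℂ)) * (r:ℂ) = ((r / (2 * β) : ℝ) : ℂ) * Complex.I := by
    have : ((2:ℂ) * (β:ℂ)) ≠ 0 := by
      simp [hβpos.ne']
    field_simp
    push_cast
    ring
  rw [hIr]
  have hval : c1 * (r:ℂ) + c2 * (((r / (2 * β) : ℝ) : ℂ) * Complex.I)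
      = ((K * mx * r * Real.cos mθ - K * k * (r / (2 * β)) * Real.sin mθ : ℝ) : ℂ)
        + ((K * mx * r * Real.sin mθ + K * k * (r / (2 * β)) * Real.cos mθ : ℝ) : ℂ)
          * Complex.I := by
    rw [hc1_def, hc2_def, Complex.exp_mul_I, ← Complex.ofReal_cos, ← Complex.ofReal_sin]
    push_cast
    ring_nf
    rw [Complex.I_sq]
    ring
  rw [hval]
  simp only [Complex.add_re, Complex.ofReal_re, Complex.mul_re, Complex.I_re, Complex.I_im,
    Complex.ofReal_im, mul_zero, zero_mul, mul_one, sub_zero, zero_sub, add_zero]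
  -- final real algebra
  have hsa : (0:ℝ) < Real.sqrt a := Real.sqrt_pos.mpr ha
  have hKr : K * r = Real.exp (-sθ / 2) := by
    have h1 : Real.sqrt (π / b) * Real.sqrt (π / β) = 2 * π * Real.sqrt a := by
      rw [← Real.sqrt_mul (by positivity)]
      have : π / b * (π / β) = (2 * π) ^ 2 * a := by
        rw [hb_def, hβ_def]
        field_simp
      rw [this, Real.sqrt_mul (sq_nonneg _), Real.sqrt_sq (by positivity)]
    have h2 : -(1 / (4 * β)) = -sθ / 2 := by
      rw [hβ_def]; field_simp; ring
    have hne : 2 * π * Real.sqrt a ≠ 0 := by positivity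
    rw [hK_def, hr_def, hC_def]
    calc (2 * π * Real.sqrt a)⁻¹ * Real.sqrt (π / b)
          * (Real.sqrt (π / β) * Real.exp (-(1 / (4 * β))))
        = (2 * π * Real.sqrt a)⁻¹ * (Real.sqrt (π / b) * Real.sqrt (π / β))
          * Real.exp (-(1 / (4 * β))) := by ring
      _ = (2 * π * Real.sqrt a)⁻¹ * (2 * π * Real.sqrt a) * Real.exp (-(1 / (4 * β))) := by
          rw [h1]
      _ = Real.exp (-(1 / (4 * β))) := by rw [inv_mul_cancel₀ hne, one_mul]
      _ = Real.exp (-sθ / 2) := by rw [h2]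
  have hk2β : k * (r / (2 * β)) = ρ * r := by
    rw [hk_def, hβ_def]
    field_simp
  calc K * mx * r * Real.cos mθ - K * k * (r / (2 * β)) * Real.sin mθ
      = (K * r) * (mx * Real.cos mθ) - K * (k * (r / (2 * β))) * Real.sin mθ := by ring
    _ = Real.exp (-sθ / 2) * (mx * Real.cos mθ - ρ * Real.sin mθ) := by
        rw [hKr, hk2β]
        rw [← hKr]
        ring
end

section
/- Let μ_x, μ_θ, ρ ∈ ℝ and σ_x², σ_θ² > 0 with σ_x² σ_θ² − ρ² > 0, and let p(x, θ) = (2π √(σ_x² σ_θ² − ρ²))^{−1} exp(−½ (x − μ_x, θ − μ_θ) Σ^{−1} (x − μ_x, θ − μ_θ)ᵀ) be the joint Gaussian density on ℝ² with covariance matrix Σ = [[σ_x², ρ], [ρ, σ_θ²]]. Then ∫∫_{ℝ²} x · sin θ · p(x, θ) dx dθ = exp(−σ_θ²/2) · (μ_x · sin μ_θ + ρ · cos μ_θ). -/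
section Helpers
open MeasureTheory Real Set Filter Complex

lemma integral_deriv_eq_zero' {E : Type*} [NormedAddCommGroup E] [NormedSpace ℝ E] [CompleteSpace E]
    {f f' : ℝ → E} (hderiv : ∀ x, HasDerivAt f (f' x) x)
    (hint : Integrable f') (h1 : Tendsto f atTop (nhds 0))
    (h2 : Tendsto f atBot (nhds 0)) : ∫ x, f' x = 0 := by
  rw [← intervalIntegral.integral_Iic_add_Ioi (b := 0) hint.integrableOn hint.integrableOn,
    integral_Iic_of_hasDerivAt_of_tendsto' (fun x _ => hderiv x) hint.integrableOn h2,
    integral_Ioi_of_hasDerivAt_of_tendsto' (fun x _ => hderiv x) hint.integrableOn h1]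
  simp

lemma cexp_gauss_lin {b : ℝ} (hb : 0 < b) :
    ∫ t : ℝ, cexp (-(b:ℂ) * t ^ 2 + I * t) =
      (Real.sqrt (π / b) : ℂ) * cexp (-(1 / (4 * b)) : ℂ) := by
  have hb' : ((-b : ℂ)).re < 0 := by simpa using hb
  have h := integral_cexp_quadratic hb' I 0
  simp only [add_zero] at h
  rw [h]
  rw [Real.sqrt_eq_rpow, Complex.ofReal_cpow (by positivity), neg_neg]
  congr 1
  · push_cast
    norm_num
  · congr 1
    rw [I_sq]
    field_simp
    ring

lemma re_quad (b t : ℝ) : (-(b:ℂ) * t ^ 2 + I * t).re = -b * t ^ 2 := by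
  simp [← Complex.ofReal_pow]

lemma integrable_mul_cexp_gauss_lin {b : ℝ} (hb : 0 < b) :
    Integrable fun t : ℝ => (t:ℂ) * cexp (-(b:ℂ) * t ^ 2 + I * t) := by
  have hmes : AEStronglyMeasurable (fun t : ℝ => (t:ℂ) * cexp (-(b:ℂ) * t ^ 2 + I * t)) volume := by
    apply Continuous.aestronglyMeasurable
    exact Complex.continuous_ofReal.mul (Complex.continuous_exp.comp (by continuity))
  refine Integrable.mono' ((integrable_mul_exp_neg_mul_sq hb).abs) hmes ?_
  filter_upwards with t
  rw [norm_mul, Complex.norm_exp, re_quad]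
  simp [abs_mul, Real.norm_eq_abs, _root_.abs_of_nonneg (Real.exp_pos _).le,
    Complex.norm_real]

lemma integrable_cexp_gauss_lin {b : ℝ} (hb : 0 < b) :
    Integrable fun t : ℝ => cexp (-(b:ℂ) * t ^ 2 + I * t) := by
  simpa using integrable_cexp_quadratic (b := (b:ℂ)) (by simpa using hb) I 0

lemma mul_cexp_gauss_lin {b : ℝ} (hb : 0 < b) :
    ∫ t : ℝ, (t:ℂ) * cexp (-(b:ℂ) * t ^ 2 + I * t) =
      (I / (2 * b)) * ∫ t : ℝ, cexp (-(b:ℂ) * t ^ 2 + I * t) := by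
  set g : ℝ → ℂ := fun t => cexp (-(b:ℂ) * t ^ 2 + I * t) with hg
  have hderiv : ∀ t : ℝ, HasDerivAt (fun s : ℝ => g s)
      ((-(2*b):ℂ) * ((t:ℂ) * g t) + I * g t) t := by
    intro t
    have hz : ∀ z : ℂ, HasDerivAt (fun z : ℂ => cexp (-(b:ℂ) * z ^ 2 + I * z))
        ((-(b:ℂ) * (2 * z) + I) * cexp (-(b:ℂ) * z ^ 2 + I * z)) z := by
      intro z
      have h1 : HasDerivAt (fun z : ℂ => -(b:ℂ) * z ^ 2 + I * z) (-(b:ℂ) * (2*z) + I) z := by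
        have := ((hasDerivAt_pow 2 z).const_mul (-(b:ℂ))).add ((hasDerivAt_id z).const_mul I)
        exact this.congr_deriv (by norm_num)
      simpa [mul_comm] using h1.cexp
    have := (hz t).comp_ofReal
    convert this using 1
    rw [hg]
    push_cast
    ring
  have htends : ∀ l : Filter ℝ, Tendsto (fun t : ℝ => t^2) l atTop →
      Tendsto g l (nhds 0) := by
    intro l hl
    rw [tendsto_zero_iff_norm_tendsto_zero]
    have : ∀ t : ℝ, ‖g t‖ = Real.exp (-b * t^2) := by
      intro t
      rw [hg, Complex.norm_exp, re_quad]
    simp_rw [this]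
    exact Real.tendsto_exp_atBot.comp (hl.const_mul_atTop_of_neg (neg_lt_zero.2 hb))
  have hint1 : Integrable (fun t : ℝ => (-(2*b):ℂ) * ((t:ℂ) * g t)) volume :=
    (integrable_mul_cexp_gauss_lin hb).const_mul _
  have hint2 : Integrable (fun t : ℝ => I * g t) volume :=
    (integrable_cexp_gauss_lin hb).const_mul I
  have h0 : ∫ t : ℝ, ((-(2*b):ℂ) * ((t:ℂ) * g t) + I * g t) = 0 :=
    integral_deriv_eq_zero' hderiv (hint1.add hint2)
      (htends _ (tendsto_pow_atTop two_ne_zero))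
      (htends _ (by
        have : (fun t : ℝ => t ^ 2) = (fun t : ℝ => |t| ^ 2) := by
          funext t; rw [_root_.sq_abs]
        rw [this]
        exact (tendsto_pow_atTop two_ne_zero).comp tendsto_abs_atBot_atTop))
  rw [integral_add hint1 hint2, integral_const_mul, integral_const_mul] at h0
  have hb2 : (2 * (b:ℂ)) ≠ 0 := by
    exact_mod_cast (by positivity : (0:ℝ) < 2*b).ne'
  rw [div_mul_eq_mul_div, eq_div_iff hb2]
  linear_combination -h0

lemma integral_mul_gauss_zero {b : ℝ} (hb : 0 < b) :
    ∫ y : ℝ, y * rexp (-b * y ^ 2) = 0 := by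
  have hd : ∀ y : ℝ, HasDerivAt (fun y : ℝ => -(2*b)⁻¹ * rexp (-b*y^2))
      (y * rexp (-b*y^2)) y := by
    intro y
    have := (((hasDerivAt_pow 2 y).const_mul (-b)).exp).const_mul (-(2*b)⁻¹)
    refine this.congr_deriv ?_
    have hb0 := hb.ne'
    field_simp
    ring
  have hT : ∀ l : Filter ℝ, Tendsto (fun y : ℝ => y^2) l atTop →
      Tendsto (fun y : ℝ => -(2*b)⁻¹ * rexp (-b*y^2)) l (nhds 0) := by
    intro l hl
    rw [show (0:ℝ) = -(2*b)⁻¹ * 0 by ring]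
    exact (Real.tendsto_exp_atBot.comp (hl.const_mul_atTop_of_neg
      (neg_lt_zero.2 hb))).const_mul _
  exact integral_deriv_eq_zero' hd (integrable_mul_exp_neg_mul_sq hb)
    (hT _ (tendsto_pow_atTop two_ne_zero))
    (hT _ (by
      have : (fun t : ℝ => t ^ 2) = (fun t : ℝ => |t| ^ 2) := by
        funext t; rw [_root_.sq_abs]
      rw [this]
      exact (tendsto_pow_atTop two_ne_zero).comp tendsto_abs_atBot_atTop))

lemma inner_moment {v : ℝ} (hv : 0 < v) (M : ℝ) :
    ∫ x : ℝ, x * rexp (-((x - M) ^ 2 / (2 * v))) = M * Real.sqrt (2 * π * v) := by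
  have hb : 0 < (2*v)⁻¹ := by positivity
  have hshift := MeasureTheory.integral_add_right_eq_self (μ := volume)
    (fun x : ℝ => x * rexp (-((x - M) ^ 2 / (2 * v)))) M
  rw [← hshift]
  have heq : ∀ y : ℝ, (fun x : ℝ => x * rexp (-((x - M) ^ 2 / (2 * v)))) (y + M)
      = y * rexp (-(2*v)⁻¹ * y^2) + M * rexp (-(2*v)⁻¹ * y^2) := by
    intro y
    simp only [add_sub_cancel_right]
    rw [show -((y:ℝ)^2/(2*v)) = -(2*v)⁻¹ * y^2 by field_simp]
    ring
  simp_rw [heq]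
  rw [integral_add (integrable_mul_exp_neg_mul_sq hb)
      ((integrable_exp_neg_mul_sq hb).const_mul M),
    integral_mul_gauss_zero hb, integral_const_mul, integral_gaussian, zero_add]
  congr 2
  field_simp

lemma outer_moment {v : ℝ} (hv : 0 < v) (m a k : ℝ) :
    ∫ θ : ℝ, Real.sin θ *
        ((a + k * (θ - m)) * ((Real.sqrt (2*π*v))⁻¹ * rexp (-((θ - m)^2/(2*v)))))
      = rexp (-v/2) * (a * Real.sin m + k * v * Real.cos m) := by
  have hv' : (v:ℂ) ≠ 0 := by exact_mod_cast hv.ne'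
  set b : ℝ := (2*v)⁻¹ with hbdef
  have hb : 0 < b := by positivity
  set C : ℝ := (Real.sqrt (2*π*v))⁻¹ with hCdef
  set g : ℝ → ℂ := fun t => cexp (-(b:ℂ) * t ^ 2 + I * t) with hgdef
  set G : ℝ → ℂ := fun t => (C:ℂ) * cexp ((m:ℂ) * I) * ((a:ℂ) * g t + (k:ℂ) * ((t:ℂ) * g t))
    with hGdef
  rw [← MeasureTheory.integral_add_right_eq_self (μ := volume)
    (fun θ : ℝ => Real.sin θ *
      ((a + k * (θ - m)) * (C * rexp (-((θ - m)^2/(2*v)))))) m]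
  have hpt : ∀ t : ℝ, Real.sin (t + m) *
      ((a + k * ((t + m) - m)) * (C * rexp (-(((t + m) - m)^2/(2*v))))) = (G t).im := by
    intro t
    simp only [add_sub_cancel_right, hGdef, hgdef]
    have hexp : -(b:ℂ) * (t:ℂ) ^ 2 + I * (t:ℂ) = ((-b * t^2 : ℝ) : ℂ) + (t:ℂ) * I := by
      push_cast; ring
    rw [hexp, Complex.exp_add]
    have hcomb : (C:ℂ) * cexp ((m:ℂ) * I) *
        ((a:ℂ) * (cexp ((-b * t^2 : ℝ) : ℂ) * cexp ((t:ℂ) * I)) +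
         (k:ℂ) * ((t:ℂ) * (cexp ((-b * t^2 : ℝ) : ℂ) * cexp ((t:ℂ) * I)))) =
        ((C * (a + k * t) * rexp (-b * t^2) : ℝ) : ℂ) * cexp (((t + m : ℝ) : ℂ) * I) := by
      push_cast [Complex.ofReal_exp, add_mul, Complex.exp_add]
      ring
    rw [hcomb]
    rw [show (((t + m : ℝ) : ℂ)) * I = ((t + m : ℝ) : ℂ) * I from rfl]
    rw [Complex.mul_im, Complex.exp_ofReal_mul_I_im, Complex.exp_ofReal_mul_I_re]
    simp only [Complex.ofReal_re, Complex.ofReal_im, zero_mul, add_zero]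
    rw [show -((t:ℝ)^2/(2*v)) = -b * t^2 by rw [hbdef]; field_simp]
    ring
  simp_rw [hpt]
  have hG : Integrable G volume := by
    apply Integrable.const_mul
    exact ((integrable_cexp_gauss_lin hb).const_mul _).add
      ((integrable_mul_cexp_gauss_lin hb).const_mul _)
  rw [show (fun t : ℝ => (G t).im) = (fun t : ℝ => RCLike.im (G t)) from rfl,
    integral_im hG]
  have hGval : ∫ t : ℝ, G t =
      ((rexp (-v/2) : ℝ) : ℂ) * cexp ((m:ℂ) * I) * ((a:ℂ) + I * (v * k)) := by
    rw [hGdef]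
    rw [integral_const_mul, integral_add ((integrable_cexp_gauss_lin hb).const_mul _)
      ((integrable_mul_cexp_gauss_lin hb).const_mul _),
      integral_const_mul, integral_const_mul, mul_cexp_gauss_lin hb, cexp_gauss_lin hb]
    have h1 : Real.sqrt (π / b) = Real.sqrt (2*π*v) := by
      congr 1
      rw [hbdef]
      field_simp
    have h2 : (-(1 / (4 * b)) : ℂ) = ((-v/2 : ℝ) : ℂ) := by
      rw [hbdef]
      push_cast
      field_simp
      ring
    have h3 : (I / (2 * (b:ℂ))) = I * v := by
      rw [hbdef]
      push_cast
      field_simp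
    rw [h1, h2, h3, ← Complex.ofReal_exp]
    have hCne : (C:ℂ) * (Real.sqrt (2*π*v) : ℂ) = 1 := by
      rw [hCdef]
      norm_cast
      rw [inv_mul_cancel₀]
      positivity
    linear_combination cexp ((m:ℂ) * I) * ((rexp (-v/2) : ℝ) : ℂ) *
      ((a:ℂ) + I * (v:ℂ) * (k:ℂ)) * hCne
  rw [hGval]
  rw [show (RCLike.im : ℂ → ℝ) = Complex.im from rfl]
  rw [Complex.mul_im, Complex.mul_im, Complex.exp_ofReal_mul_I_im, Complex.exp_ofReal_mul_I_re]
  simp only [Complex.ofReal_re, Complex.ofReal_im, Complex.add_re, Complex.add_im,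
    Complex.mul_re, Complex.mul_im, Complex.I_re, Complex.I_im, zero_mul, add_zero, one_mul,
    zero_add, mul_zero, sub_zero, zero_sub, Complex.exp_ofReal_mul_I_im,
    Complex.exp_ofReal_mul_I_re]
  ring


end Helpers




open MeasureTheory Real Matrix

theorem integral_mul_sin_bivariate_gaussian
    (mx mθ ρ sx sθ : ℝ) (hsx : 0 < sx) (hsθ : 0 < sθ) (hdet : 0 < sx * sθ - ρ ^ 2)
    (p : ℝ → ℝ → ℝ)
    (hp : ∀ x θ : ℝ, p x θ =
      (2 * π * Real.sqrt (sx * sθ - ρ ^ 2))⁻¹ *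
        Real.exp (-(1 / 2) *
          (![x - mx, θ - mθ] ⬝ᵥ (!![sx, ρ; ρ, sθ] : Matrix (Fin 2) (Fin 2) ℝ)⁻¹.mulVec
            ![x - mx, θ - mθ]))) :
    ∫ θ : ℝ, ∫ x : ℝ, x * Real.sin θ * p x θ =
      Real.exp (-sθ / 2) * (mx * Real.sin mθ + ρ * Real.cos mθ) := by
  set D : ℝ := sx * sθ - ρ ^ 2 with hD
  set v : ℝ := D / sθ with hvdef
  have hv : 0 < v := by positivity
  have hquad : ∀ x θ : ℝ,
      (![x - mx, θ - mθ] ⬝ᵥ (!![sx, ρ; ρ, sθ] : Matrix (Fin 2) (Fin 2) ℝ)⁻¹.mulVec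
            ![x - mx, θ - mθ])
      = (sθ*(x-mx)^2 - 2*ρ*(x-mx)*(θ-mθ) + sx*(θ-mθ)^2)/D := by
    intro x θ
    have hd : (!![sx, ρ; ρ, sθ] : Matrix (Fin 2) (Fin 2) ℝ).det = D := by
      simp [Matrix.det_fin_two_of, hD]; ring
    rw [Matrix.inv_def, hd, Matrix.adjugate_fin_two_of]
    simp [Matrix.mulVec, dotProduct, Fin.sum_univ_two, Ring.inverse_eq_inv']
    rw [hD]
    field_simp
    ring
  -- the sqrt identity
  have h2pi : (0:ℝ) < 2 * π := by positivity
  have hsqrt : (2 * π * Real.sqrt D)⁻¹ * Real.sqrt (2*π*v) = (Real.sqrt (2*π*sθ))⁻¹ := by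
    have hs2 : Real.sqrt (2*π*v) = Real.sqrt (2*π) * Real.sqrt D / Real.sqrt sθ := by
      rw [hvdef, show 2*π*(D/sθ) = (2*π*D)/sθ by ring,
        Real.sqrt_div (by positivity) sθ, Real.sqrt_mul h2pi.le]
    rw [hs2, Real.sqrt_mul h2pi.le sθ]
    have h1 : Real.sqrt (2*π) > 0 := Real.sqrt_pos.2 h2pi
    have h2 : Real.sqrt D > 0 := Real.sqrt_pos.2 hdet
    have h3 : Real.sqrt sθ > 0 := Real.sqrt_pos.2 hsθ
    have hms : Real.sqrt (2*π) * Real.sqrt (2*π) = 2*π := Real.mul_self_sqrt h2pi.le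
    field_simp
    have m2 : Real.sqrt 2 * Real.sqrt 2 = 2 := Real.mul_self_sqrt (by norm_num)
    have mp : Real.sqrt π * Real.sqrt π = π := Real.mul_self_sqrt Real.pi_pos.le
    linear_combination hms
  have hinner : ∀ θ : ℝ, (∫ x : ℝ, x * Real.sin θ * p x θ) =
      Real.sin θ * ((mx + (ρ/sθ) * (θ - mθ)) *
        ((Real.sqrt (2*π*sθ))⁻¹ * rexp (-((θ - mθ)^2/(2*sθ))))) := by
    intro θ
    set M : ℝ := mx + (ρ/sθ) * (θ - mθ) with hM
    have hpx : ∀ x : ℝ, x * Real.sin θ * p x θ =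
        (Real.sin θ * ((2 * π * Real.sqrt D)⁻¹ * rexp (-((θ - mθ)^2/(2*sθ))))) *
          (x * rexp (-((x - M)^2/(2*v)))) := by
      intro x
      rw [hp, hquad]
      rw [show -(1/2) * ((sθ*(x-mx)^2 - 2*ρ*(x-mx)*(θ-mθ) + sx*(θ-mθ)^2)/D)
          = -((x - M)^2/(2*v)) + -((θ - mθ)^2/(2*sθ)) by
        rw [hM, hvdef, hD]
        have hD0 : sx * sθ - ρ ^ 2 ≠ 0 := hdet.ne'
        have hD1 : sθ * sx - ρ ^ 2 ≠ 0 := by rw [mul_comm]; exact hD0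
        have hs0 := hsθ.ne'
        field_simp
        ring]
      rw [Real.exp_add]
      ring
    simp_rw [hpx]
    rw [integral_const_mul, inner_moment hv M]
    linear_combination (Real.sin θ * M * rexp (-((θ - mθ)^2/(2*sθ)))) * hsqrt
  simp only [hinner]
  rw [outer_moment hsθ mθ mx (ρ/sθ)]
  rw [div_mul_cancel₀ _ hsθ.ne']
end
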